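/- Let G be a graph with 2n non-isolated vertices satisfying (∗), (∗∗) and unmixedness conditions (i),(ii), with deg(y_1)=1. Then the induced subgraph G \ {x_1, y_1}, restricted to its non-isolated vertices, again has minimum vertex cover size equal to half its number of vertices and satisfies conditions (∗), (∗∗), (i), (ii) (with respect to the inherited labeling x_2,...,x_n, y_2,...,y_n). -/

import Mathlib

open Relation

/-- `C` is a vertex cover of `G`. -/
def IsVC {V : Type*} (G : SimpleGraph V) (C : Set V) : Prop :=
  ∀ ⦃u v : V⦄, G.Adj u v → u ∈ C ∨ v ∈ C

/-- `C` is a minimal vertex cover of `G`. -/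
def IsMinVC {V : Type*} (G : SimpleGraph V) (C : Set V) : Prop :=
  IsVC G C ∧ ∀ D : Set V, IsVC G D → D ⊆ C → D = C

/-- `S` is an independent set of `G`. -/
def IsIndep {V : Type*} (G : SimpleGraph V) (S : Set V) : Prop :=
  ∀ u ∈ S, ∀ v ∈ S, ¬ G.Adj u v

/-- `S` is a maximal independent set of `G`. -/
def IsMaxIndep {V : Type*} (G : SimpleGraph V) (S : Set V) : Prop :=
  IsIndep G S ∧ ∀ T : Set V, IsIndep G T → S ⊆ T → T = S

/-- `G` has no isolated vertices. -/
def NoIsolated {V : Type*} (G : SimpleGraph V) : Prop := ∀ v, ∃ w, G.Adj v w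

/-- The vertex set `{x_1,...,x_n} ∪ {y_1,...,y_n}`: `xv i = Sum.inl i`, `yv i = Sum.inr i`. -/
abbrev Vtx (n : ℕ) := Fin n ⊕ Fin n

def xv {n : ℕ} (i : Fin n) : Vtx n := Sum.inl i
def yv {n : ℕ} (i : Fin n) : Vtx n := Sum.inr i

/-- Condition (∗): X is a minimal vertex cover, Y is a maximal independent set,
and `x_i y_i` is an edge for every `i`. -/
def StarCond {n : ℕ} (G : SimpleGraph (Vtx n)) : Prop :=
  IsMinVC G (Set.range xv) ∧ IsMaxIndep G (Set.range yv) ∧ ∀ i, G.Adj (xv i) (yv i)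

/-- Condition (∗∗): `x_i y_j ∈ E(G)` implies `i ≤ j`. -/
def StarStarCond {n : ℕ} (G : SimpleGraph (Vtx n)) : Prop :=
  ∀ i j : Fin n, G.Adj (xv i) (yv j) → i ≤ j

/-- Condition (i): for distinct `i,j,k` and `z_i ∈ {x_i,y_i}`, if `z_i x_j` and `y_j x_k`
are edges then so is `z_i x_k`. -/
def CondI {n : ℕ} (G : SimpleGraph (Vtx n)) : Prop :=
  ∀ i j k : Fin n, i ≠ j → j ≠ k → i ≠ k →
    ∀ z ∈ ({xv i, yv i} : Set (Vtx n)),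
      G.Adj z (xv j) → G.Adj (yv j) (xv k) → G.Adj z (xv k)

/-- Condition (ii): `x_i y_j ∈ E(G)` implies `x_i x_j ∉ E(G)`. -/
def CondII {n : ℕ} (G : SimpleGraph (Vtx n)) : Prop :=
  ∀ i j : Fin n, G.Adj (xv i) (yv j) → ¬ G.Adj (xv i) (xv j)

/-- The minimum vertex cover size of `G` (the height of the edge ideal) is at least `n`. -/
def HeightN {n : ℕ} (G : SimpleGraph (Vtx n)) : Prop :=
  ∀ C : Finset (Vtx n), IsVC G ↑C → n ≤ C.card

/-- Directed edge `i → j` of the semidirected graph `𝔡_G`. -/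
def dirEdge {n : ℕ} (G : SimpleGraph (Vtx n)) (i j : Fin n) : Prop :=
  i ≠ j ∧ G.Adj (xv i) (yv j)

/-- Undirected edge `ij` of the semidirected graph `𝔡_G`. -/
def undirEdge {n : ℕ} (G : SimpleGraph (Vtx n)) (i j : Fin n) : Prop :=
  G.Adj (xv i) (xv j)

/-- inductive step of Theorem 3.1. Let `G` be a graph on
`{x_1,…,x_{n+1},y_1,…,y_{n+1}}` with no isolated vertices, minimum vertex cover size
`n+1`, satisfying (∗), (∗∗), (i), (ii), and `deg(y_1) = 1`. Then the induced subgraph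
`G \ {x_1, y_1}` (with the inherited labeling `x_2,…,x_{n+1}, y_2,…,y_{n+1}`) has no
isolated vertices, minimum vertex cover size `n` (half its number of vertices), and
satisfies (∗), (∗∗), (i), (ii). -/
theorem delete_x1y1_inductive_step {n : ℕ} (G : SimpleGraph (Vtx (n + 1)))
    (hiso : NoIsolated G) (hht : HeightN G) (hstar : StarCond G)
    (hss : StarStarCond G) (h1 : CondI G) (h2 : CondII G)
    (hdeg : ∀ v, G.Adj (yv (0 : Fin (n + 1))) v → v = xv (0 : Fin (n + 1))) :
    NoIsolated (G.comap (Sum.map Fin.succ Fin.succ)) ∧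
    HeightN (G.comap (Sum.map Fin.succ Fin.succ)) ∧
    StarCond (G.comap (Sum.map Fin.succ Fin.succ)) ∧
    StarStarCond (G.comap (Sum.map Fin.succ Fin.succ)) ∧
    CondI (G.comap (Sum.map Fin.succ Fin.succ)) ∧
    CondII (G.comap (Sum.map Fin.succ Fin.succ)) := by
  classical
  set f : Vtx n → Vtx (n + 1) := Sum.map Fin.succ Fin.succ with hf
  have hfinj : Function.Injective f :=
    Function.Injective.sumMap (Fin.succ_injective n) (Fin.succ_injective n)
  have hadj : ∀ u v : Vtx n, (G.comap f).Adj u v ↔ G.Adj (f u) (f v) := fun _ _ => Iff.rfl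
  have hfx : ∀ i : Fin n, f (xv i) = xv i.succ := fun _ => rfl
  have hfy : ∀ i : Fin n, f (yv i) = yv i.succ := fun _ => rfl
  have hYindep : IsIndep G (Set.range yv) := hstar.2.1.1
  have hxy : ∀ i : Fin (n+1), G.Adj (xv i) (yv i) := hstar.2.2
  have hsurj : ∀ v : Vtx (n+1), v = xv 0 ∨ v = yv 0 ∨ ∃ w, f w = v := by
    intro v
    cases v with
    | inl i =>
      rcases Fin.eq_zero_or_eq_succ i with h | ⟨j, hj⟩
      · exact Or.inl (by simp [xv, h])
      · exact Or.inr (Or.inr ⟨xv j, by simp [f, xv, hj]⟩)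
    | inr i =>
      rcases Fin.eq_zero_or_eq_succ i with h | ⟨j, hj⟩
      · exact Or.inr (Or.inl (by simp [yv, h]))
      · exact Or.inr (Or.inr ⟨yv j, by simp [f, yv, hj]⟩)
  refine ⟨?_, ?_, ⟨⟨?_, ?_⟩, ⟨?_, ?_⟩, fun i => hxy i.succ⟩, ?_, ?_, ?_⟩
  · -- NoIsolated
    rintro (i | i)
    · exact ⟨yv i, hxy i.succ⟩
    · exact ⟨xv i, (hxy i.succ).symm⟩
  · -- HeightN
    intro C hC
    set C' : Finset (Vtx (n+1)) := insert (xv 0) (C.image f) with hC'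
    have hvc : IsVC G ↑C' := by
      intro u v huv
      rcases hsurj u with hu | hu | ⟨w, hw⟩
      · exact Or.inl (by simp [hC', hu])
      · subst hu
        exact Or.inr (by simp [hC', hdeg v huv])
      · rcases hsurj v with hv | hv | ⟨w', hw'⟩
        · exact Or.inr (by simp [hC', hv])
        · subst hv
          exact Or.inl (by simp [hC', hdeg u huv.symm])
        · subst hw; subst hw'
          rcases hC ((hadj w w').2 huv) with h | h
          · exact Or.inl (Finset.mem_coe.mpr (Finset.mem_insert_of_mem
              (Finset.mem_image_of_mem f h)))
          · exact Or.inr (Finset.mem_coe.mpr (Finset.mem_insert_of_mem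
              (Finset.mem_image_of_mem f h)))
    have := hht C' hvc
    have hcard : C'.card ≤ C.card + 1 := by
      calc C'.card ≤ (C.image f).card + 1 := Finset.card_insert_le _ _
        _ = C.card + 1 := by rw [Finset.card_image_of_injective _ hfinj]
    omega
  · -- X' is VC
    rintro (i | i) (j | j) h
    · exact Or.inl ⟨i, rfl⟩
    · exact Or.inl ⟨i, rfl⟩
    · exact Or.inr ⟨j, rfl⟩
    · exact absurd ((hadj _ _).1 h) (hYindep _ ⟨i.succ, rfl⟩ _ ⟨j.succ, rfl⟩)
  · -- X' minimal
    intro D hD hsub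
    refine Set.Subset.antisymm hsub ?_
    rintro _ ⟨i, rfl⟩
    rcases hD ((hadj (xv i) (yv i)).2 (hxy i.succ)) with h | h
    · exact h
    · rcases hsub h with ⟨j, hj⟩
      simp [xv, yv] at hj
  · -- Y' indep
    rintro _ ⟨i, rfl⟩ _ ⟨j, rfl⟩ h
    exact hYindep _ ⟨i.succ, rfl⟩ _ ⟨j.succ, rfl⟩ ((hadj _ _).1 h)
  · -- Y' maximal
    intro T hT hsub
    refine Set.Subset.antisymm ?_ hsub
    rintro (i | i) hv
    · exact absurd (hT _ hv _ (hsub ⟨i, rfl⟩) (hxy i.succ)) (fun h => h)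
    · exact ⟨i, rfl⟩
  · -- StarStar
    intro i j h
    have := hss i.succ j.succ ((hadj _ _).1 h)
    exact Fin.succ_le_succ_iff.mp this
  · -- CondI
    intro i j k hij hjk hik z hz hzj hjk'
    have hij' : i.succ ≠ j.succ := fun h => hij (Fin.succ_injective _ h)
    have hjk'' : j.succ ≠ k.succ := fun h => hjk (Fin.succ_injective _ h)
    have hik' : i.succ ≠ k.succ := fun h => hik (Fin.succ_injective _ h)
    have hz' : f z ∈ ({xv i.succ, yv i.succ} : Set (Vtx (n+1))) := by
      rcases hz with h | h <;> subst h <;> simp [f, xv, yv]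
    exact h1 i.succ j.succ k.succ hij' hjk'' hik' (f z) hz' hzj hjk'
  · -- CondII
    intro i j h
    exact h2 i.succ j.succ ((hadj _ _).1 h)
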